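/- arXiv:1804.11268 — 2 statements merged into one kernel-verified Lean document; each statement's English description precedes it below -/
import Mathlib

section
/- Let 0 < R < 1, eb > 0, and N a positive natural number. Define g(t) = t - log_R(R^t + eb). If T is uniformly distributed on {1, 2, ..., N}, then the expectation E[g(T)] lies in the interval [g((N+1)/2), g(N)], i.e., (N+1)/2 - log_R(R^{(N+1)/2} + eb) ≤ E[g(T)] ≤ N - log_R(R^N + eb). -/
private lemma g_eq (R eb : ℝ) (hR0 : 0 < R) (hR1 : R < 1) (heb : 0 < eb) (t : ℝ) :
    t - Real.log (R ^ t + eb) / Real.log R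
      = Real.log (1 + eb * R ^ (-t)) / (-Real.log R) := by
  have hL : Real.log R < 0 := Real.log_neg hR0 hR1
  have hLne : Real.log R ≠ 0 := hL.ne
  have hx : (0:ℝ) < R ^ t := Real.rpow_pos_of_pos hR0 t
  have h2 : R ^ t * R ^ (-t) = 1 := by
    rw [← Real.rpow_add hR0]; simp
  have hpos : (0:ℝ) < 1 + eb * R ^ (-t) := by positivity
  have h1 : R ^ t + eb = R ^ t * (1 + eb * R ^ (-t)) := by
    linear_combination (-eb) * h2
  rw [h1, Real.log_mul hx.ne' hpos.ne', Real.log_rpow hR0]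
  field_simp
  ring

private lemma g_mono (R eb : ℝ) (hR0 : 0 < R) (hR1 : R < 1) (heb : 0 < eb)
    {s t : ℝ} (hst : s ≤ t) :
    s - Real.log (R ^ s + eb) / Real.log R ≤ t - Real.log (R ^ t + eb) / Real.log R := by
  have hL : Real.log R < 0 := Real.log_neg hR0 hR1
  rw [g_eq R eb hR0 hR1 heb, g_eq R eb hR0 hR1 heb]
  have hu : R ^ (-s) ≤ R ^ (-t) :=
    Real.rpow_le_rpow_of_exponent_ge hR0 hR1.le (neg_le_neg hst)
  have hA : (0:ℝ) < 1 + eb * R ^ (-s) := by positivity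
  have hlog : Real.log (1 + eb * R ^ (-s)) ≤ Real.log (1 + eb * R ^ (-t)) := by
    apply Real.log_le_log hA; nlinarith
  apply div_le_div_of_nonneg_right hlog ?_ |>.trans_eq rfl
  linarith

private lemma g_mid (R eb : ℝ) (hR0 : 0 < R) (hR1 : R < 1) (heb : 0 < eb) (s t : ℝ) :
    2 * ((s + t) / 2 - Real.log (R ^ ((s + t) / 2) + eb) / Real.log R)
      ≤ (s - Real.log (R ^ s + eb) / Real.log R)
        + (t - Real.log (R ^ t + eb) / Real.log R) := by
  have hL : Real.log R < 0 := Real.log_neg hR0 hR1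
  rw [g_eq R eb hR0 hR1 heb, g_eq R eb hR0 hR1 heb, g_eq R eb hR0 hR1 heb]
  set u := R ^ (-s) with hu
  set v := R ^ (-t) with hv
  set w := R ^ (-((s + t) / 2)) with hw
  have hupos : 0 < u := Real.rpow_pos_of_pos hR0 _
  have hvpos : 0 < v := Real.rpow_pos_of_pos hR0 _
  have hwpos : 0 < w := Real.rpow_pos_of_pos hR0 _
  have hw2 : w * w = u * v := by
    rw [hu, hv, hw, ← Real.rpow_add hR0, ← Real.rpow_add hR0]; ring_nf
  have hamgm : 2 * w ≤ u + v := by nlinarith [sq_nonneg (u - v), sq_nonneg (u + v - 2*w)]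
  have hA : (0:ℝ) < 1 + eb * u := by positivity
  have hB : (0:ℝ) < 1 + eb * v := by positivity
  have hC : (0:ℝ) < 1 + eb * w := by positivity
  have hkey : eb ^ 2 * (w * w) = eb ^ 2 * (u * v) := by rw [hw2]
  have hkey2 : 0 ≤ eb * (u + v - 2 * w) := mul_nonneg heb.le (by linarith)
  have hsq : (1 + eb * w) * (1 + eb * w) ≤ (1 + eb * u) * (1 + eb * v) := by nlinarith
  have hlog : 2 * Real.log (1 + eb * w) ≤ Real.log (1 + eb * u) + Real.log (1 + eb * v) := by
    have h := Real.log_le_log (by positivity) hsq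
    rw [Real.log_mul hC.ne' hC.ne', Real.log_mul hA.ne' hB.ne'] at h
    linarith
  have hnL : 0 < -Real.log R := by linarith
  rw [← add_div, ← mul_div_assoc]
  exact div_le_div_of_nonneg_right hlog hnL.le

theorem stmt_6 (R eb : ℝ) (N : ℕ) (hR0 : 0 < R) (hR1 : R < 1) (heb : 0 < eb)
    (hN : 0 < N) :
    (((N : ℝ) + 1) / 2 - Real.log (R ^ (((N : ℝ) + 1) / 2) + eb) / Real.log R ≤
      (1 / (N : ℝ)) * ∑ i ∈ Finset.Icc 1 N,
        ((i : ℝ) - Real.log (R ^ (i : ℝ) + eb) / Real.log R)) ∧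
    ((1 / (N : ℝ)) * ∑ i ∈ Finset.Icc 1 N,
        ((i : ℝ) - Real.log (R ^ (i : ℝ) + eb) / Real.log R) ≤
      (N : ℝ) - Real.log (R ^ (N : ℝ) + eb) / Real.log R) := by
  have hNR : (0:ℝ) < (N:ℝ) := by exact_mod_cast hN
  set f : ℕ → ℝ := fun i => (i : ℝ) - Real.log (R ^ (i : ℝ) + eb) / Real.log R with hf
  constructor
  · -- lower bound
    set m : ℝ := ((N : ℝ) + 1) / 2 with hm
    have hrefl : ∑ i ∈ Finset.Icc 1 N, f i = ∑ i ∈ Finset.Icc 1 N, f (N + 1 - i) := by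
      apply Finset.sum_nbij' (fun i => N + 1 - i) (fun i => N + 1 - i) <;>
        intros a ha <;> simp only [Finset.mem_Icc] at * <;> first | omega | (congr 1; omega)
    have hpair : ∀ i ∈ Finset.Icc 1 N, 2 * (m - Real.log (R ^ m + eb) / Real.log R)
        ≤ f i + f (N + 1 - i) := by
      intro i hi
      simp only [Finset.mem_Icc] at hi
      have hc : ((N + 1 - i : ℕ) : ℝ) = (N : ℝ) + 1 - (i : ℝ) := by
        push_cast [Nat.cast_sub (by omega : i ≤ N + 1)]; ring
      have := g_mid R eb hR0 hR1 heb (i : ℝ) ((N : ℝ) + 1 - (i : ℝ))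
      have hmeq : ((i : ℝ) + ((N : ℝ) + 1 - (i : ℝ))) / 2 = m := by rw [hm]; ring
      rw [hmeq] at this
      simpa only [hf, hc] using this
    have hsum : (N : ℝ) * (2 * (m - Real.log (R ^ m + eb) / Real.log R))
        ≤ ∑ i ∈ Finset.Icc 1 N, (f i + f (N + 1 - i)) := by
      calc (N : ℝ) * (2 * (m - Real.log (R ^ m + eb) / Real.log R))
          = ∑ _i ∈ Finset.Icc 1 N, 2 * (m - Real.log (R ^ m + eb) / Real.log R) := by
            rw [Finset.sum_const, Nat.card_Icc]; simp [nsmul_eq_mul]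
        _ ≤ _ := Finset.sum_le_sum hpair
    rw [Finset.sum_add_distrib, ← hrefl] at hsum
    have h2 : (N : ℝ) * (m - Real.log (R ^ m + eb) / Real.log R)
        ≤ ∑ i ∈ Finset.Icc 1 N, f i := by linarith
    rw [hf] at h2
    calc m - Real.log (R ^ m + eb) / Real.log R
        = (1 / (N : ℝ)) * ((N : ℝ) * (m - Real.log (R ^ m + eb) / Real.log R)) := by
          field_simp
      _ ≤ _ := by
          apply mul_le_mul_of_nonneg_left h2 (by positivity)
  · -- upper bound
    have hstep : ∑ i ∈ Finset.Icc 1 N, f i ≤ (N : ℝ) * f N := by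
      calc ∑ i ∈ Finset.Icc 1 N, f i ≤ ∑ _i ∈ Finset.Icc 1 N, f N := by
            apply Finset.sum_le_sum
            intro i hi
            simp only [Finset.mem_Icc] at hi
            exact g_mono R eb hR0 hR1 heb (by exact_mod_cast hi.2)
        _ = (N : ℝ) * f N := by rw [Finset.sum_const, Nat.card_Icc]; simp [nsmul_eq_mul]
    calc (1 / (N : ℝ)) * ∑ i ∈ Finset.Icc 1 N, f i
        ≤ (1 / (N : ℝ)) * ((N : ℝ) * f N) := by
          apply mul_le_mul_of_nonneg_left hstep (by positivity)
      _ = f N := by field_simp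
end

section
/- Let A be a linear map on a normed vector space, b a vector, x a vector with residual r = b - A x, and let x' = x + e be a perturbation. If ‖A e‖ ≤ eb * ‖A x‖ for some eb ≥ 0, then the new residual r' = b - A x' satisfies ‖r'‖ ≤ (1 + eb) * ‖r‖ + eb * ‖b‖. -/
theorem stmt_8 {E : Type*} [NormedAddCommGroup E] [NormedSpace ℝ E]
    (A : E →ₗ[ℝ] E) (b x e : E) (eb : ℝ) (heb : 0 ≤ eb)
    (hAe : ‖A e‖ ≤ eb * ‖A x‖) :
    ‖b - A (x + e)‖ ≤ (1 + eb) * ‖b - A x‖ + eb * ‖b‖ := by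
  have h1 : b - A (x + e) = (b - A x) - A e := by
    rw [map_add]; abel
  have h2 : ‖A x‖ ≤ ‖b‖ + ‖b - A x‖ := by
    calc ‖A x‖ = ‖b - (b - A x)‖ := by rw [sub_sub_cancel]
    _ ≤ ‖b‖ + ‖b - A x‖ := norm_sub_le _ _
  calc ‖b - A (x + e)‖ ≤ ‖b - A x‖ + ‖A e‖ := by rw [h1]; exact norm_sub_le _ _
  _ ≤ ‖b - A x‖ + eb * (‖b‖ + ‖b - A x‖) := by
      have := hAe.trans (mul_le_mul_of_nonneg_left h2 heb); linarith
  _ = (1 + eb) * ‖b - A x‖ + eb * ‖b‖ := by ring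
end
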